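/- Let (N, d) be a proper metric space (closed balls are compact) which admits a dilation: there exist λ ∈ (0, 1) and a bijection ψ : N → N with d(ψ(x), ψ(x')) = λ·d(x, x') for all x, x' ∈ N. Suppose N admits an open cover 𝒰 with multiplicity at most K + 1 which is radially sublinear with respect to some basepoint n₀, i.e. lim_{m→∞} (1/m) · sup{diam(U) : U ∈ 𝒰, d(n₀, U) ≤ m} = 0. Then the topological covering dimension of N is at most K; concretely, for every compact subset B of N and every open cover 𝓑 of B, there is a collection of open sets, each contained in some member of 𝓑, which covers B and has multiplicity at most K + 1. -/

import Mathlib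

open Metric Set

/-- A metric space is 1-uniformly discrete. -/
def UnifDiscrete (X : Type*) [MetricSpace X] : Prop :=
  ∀ x y : X, x ≠ y → 1 ≤ dist x y

/-- Bounded geometry: balls of each radius have uniformly bounded cardinality. -/
def BddGeom (X : Type*) [MetricSpace X] : Prop :=
  ∀ R : ℝ, ∃ N : ℕ, ∀ (x : X) (s : Finset X), ↑s ⊆ Metric.closedBall x R → s.card ≤ N

/-- A regular map between metric spaces. -/
def IsRegularMap {X Y : Type*} [MetricSpace X] [MetricSpace Y] (f : X → Y) : Prop :=
  ∃ κ : ℕ, 1 ≤ κ ∧ (∀ x x' : X, dist (f x) (f x') ≤ κ * (1 + dist x x')) ∧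
    ∀ y : Y, ∃ c : Finset X, c.card ≤ κ ∧ f ⁻¹' Metric.ball y 1 ⊆ ⋃ x ∈ c, Metric.ball x 1

/-- A quasi-isometric embedding. -/
def IsQIEmbedding {X Y : Type*} [MetricSpace X] [MetricSpace Y] (f : X → Y) : Prop :=
  ∃ L D : ℝ, 1 ≤ L ∧ 0 ≤ D ∧ ∀ x x' : X,
    L⁻¹ * dist x x' - D ≤ dist (f x) (f x') ∧ dist (f x) (f x') ≤ L * dist x x' + D

/-- A coarse Lipschitz map. -/
def CoarseLipschitz {X Y : Type*} [MetricSpace X] [MetricSpace Y] (f : X → Y) : Prop :=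
  ∃ K : ℝ, 1 ≤ K ∧ ∀ x x' : X, dist (f x) (f x') ≤ K * dist x x' + K

/-- The metric of `T` is the graph metric of a 3-regular tree. -/
def IsCubicTreeMetric (T : Type*) [MetricSpace T] : Prop :=
  ∃ G : SimpleGraph T, G.Connected ∧ G.IsAcyclic ∧
    (∀ v : T, (G.neighborSet v).ncard = 3) ∧
    ∀ u v : T, dist u v = (G.dist u v : ℝ)

/-- The metric of `Z` is the graph metric of a connected graph of uniformly bounded degree. -/
def IsBddDegGraphMetric (Z : Type*) [MetricSpace Z] : Prop :=
  ∃ G : SimpleGraph Z, G.Connected ∧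
    (∃ D : ℕ, ∀ v : Z, (G.neighborSet v).ncard ≤ D) ∧
    ∀ u v : Z, dist u v = (G.dist u v : ℝ)

/-- A non-decreasing subexponential function `[0,∞) → [0,∞)`. -/
def SubexpFun (g : ℝ → ℝ) : Prop :=
  MonotoneOn g (Set.Ici 0) ∧ (∀ r : ℝ, 0 ≤ g r) ∧
    Filter.Tendsto (fun r => Real.log (g r) / r) Filter.atTop (nhds 0)

/-- Every ball of radius `r` in `Z` contains at most `g r` points. -/
def HasGrowthBound (Z : Type*) [MetricSpace Z] (g : ℝ → ℝ) : Prop :=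
  ∀ (z : Z) (r : ℝ), 0 ≤ r → ∀ s : Finset Z, ↑s ⊆ Metric.closedBall z r → (s.card : ℝ) ≤ g r

def HasSubexpGrowth (Z : Type*) [MetricSpace Z] : Prop :=
  ∃ g : ℝ → ℝ, SubexpFun g ∧ HasGrowthBound Z g

def HasPolyGrowth (Z : Type*) [MetricSpace Z] : Prop :=
  ∃ (C : ℝ) (d : ℕ), 1 ≤ C ∧ HasGrowthBound Z (fun r => C * r ^ d + C)

/-- Distinct members of the family are at distance at least `r` from each other. -/
def SepFamily {X : Type*} [MetricSpace X] (r : ℝ) (𝒰 : Set (Set X)) : Prop :=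
  ∀ U ∈ 𝒰, ∀ V ∈ 𝒰, U ≠ V → ∀ x ∈ U, ∀ y ∈ V, r ≤ dist x y

/-- A decomposition of `X` into `n+1` colours of `r`-separated pieces. -/
def Decomp {X : Type*} [MetricSpace X] (n : ℕ) (r : ℝ) (𝒰 : Fin (n+1) → Set (Set X)) : Prop :=
  (∀ x : X, ∃ i, ∃ U ∈ 𝒰 i, x ∈ U) ∧ ∀ i, SepFamily r (𝒰 i)

/-- A collection of subsets of `X` has growth uniformly controlled by the family `F`. -/
def FGrowing {X : Type*} [MetricSpace X] (F : Set (ℝ → ℝ)) (𝒰 : Set (Set X)) : Prop :=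
  ∃ f ∈ F, ∃ C : ℝ, 1 ≤ C ∧ ∀ U ∈ 𝒰, ∀ (x : X) (r : ℝ), 0 ≤ r →
    ∀ s : Finset X, ↑s ⊆ U ∩ Metric.closedBall x r → (s.card : ℝ) ≤ C * f (C * r) + C

/-- `asdim_F X ≤ n`. -/
def AsdimLE (F : Set (ℝ → ℝ)) (X : Type*) [MetricSpace X] (n : ℕ) : Prop :=
  ∀ r : ℝ, 0 < r → ∃ 𝒰 : Fin (n+1) → Set (Set X),
    Decomp n r 𝒰 ∧ FGrowing F (⋃ i, 𝒰 i)

/-- Iterated neighbourhoods `N^m_s(Y)` of `Y` with respect to the collection `𝒴`. -/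
def iterNbhd {X : Type*} [MetricSpace X] (𝒴 : Set (Set X)) (s : ℝ) : ℕ → Set X → Set X
  | 0, Y => Y
  | m + 1, Y => ⋃₀ {Y' | Y' ∈ 𝒴 ∧ ∃ x ∈ Y', ∃ z ∈ iterNbhd 𝒴 s m Y, dist x z ≤ s}

/-- `ov-asdim_F X ≤ n`. -/
def OvAsdimLE (F : Set (ℝ → ℝ)) (X : Type*) [MetricSpace X] (n : ℕ) : Prop :=
  ∀ r : ℝ, 0 < r → ∃ 𝒰 : Fin (n+1) → Set (Set X),
    Decomp n r 𝒰 ∧ ∀ s : ℝ, 1 ≤ s → ∀ m : ℕ,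
      FGrowing F ((iterNbhd (⋃ i, 𝒰 i) s m) '' (⋃ i, 𝒰 i))

/-- A family of non-decreasing functions `[0,∞) → [0,∞)`. -/
def NondecrFamily (F : Set (ℝ → ℝ)) : Prop :=
  ∀ f ∈ F, MonotoneOn f (Set.Ici 0) ∧ ∀ r : ℝ, 0 ≤ r → 0 ≤ f r

/-- The family of non-decreasing subexponential functions. -/
def seFamily : Set (ℝ → ℝ) := {g | SubexpFun g}

/-- The family of non-decreasing functions bounded by `C·r^d + C`. -/
def polyFamily (d : ℕ) : Set (ℝ → ℝ) :=
  {f | MonotoneOn f (Set.Ici 0) ∧ (∀ r : ℝ, 0 ≤ f r) ∧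
    ∃ C : ℝ, 0 < C ∧ ∀ r : ℝ, 0 ≤ r → f r ≤ C * r ^ d + C}

/-- `asdim X ≤ n` : classical asymptotic dimension. -/
def ClassicalAsdimLE (X : Type*) [MetricSpace X] (n : ℕ) : Prop :=
  ∀ r : ℝ, 0 < r → ∃ 𝒰 : Fin (n+1) → Set (Set X), Decomp n r 𝒰 ∧
    ∃ B : ℝ, ∀ U ∈ ⋃ i, 𝒰 i, ∀ x ∈ U, ∀ y ∈ U, dist x y ≤ B

/-- A collection of sets has (0-)multiplicity at most `k`. -/
def MultLE {X : Type*} (𝒰 : Set (Set X)) (k : ℕ) : Prop :=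
  ∀ x : X, ∀ s : Finset (Set X), ↑s ⊆ 𝒰 → (∀ U ∈ s, x ∈ U) → s.card ≤ k

/-- Iterates of the inverse of an equivalence. -/
def iterSymmEquiv {N : Type*} (ψ : N ≃ N) : ℕ → (N ≃ N)
  | 0 => Equiv.refl N
  | k + 1 => (iterSymmEquiv ψ k).trans ψ.symm

/-- A proper metric space admitting a dilation and a radially sublinear
open cover of multiplicity at most `K + 1` has topological covering dimension at most `K`. -/
theorem topdim_le_of_dilation_and_radially_sublinear_cover
    (N : Type*) [MetricSpace N] [ProperSpace N]
    (lam : ℝ) (hlam : lam ∈ Set.Ioo (0 : ℝ) 1) (ψ : N ≃ N)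
    (hψ : ∀ x y : N, dist (ψ x) (ψ y) = lam * dist x y)
    (K : ℕ) (𝒰 : Set (Set N))
    (hopen : ∀ U ∈ 𝒰, IsOpen U)
    (hcover : ∀ x : N, ∃ U ∈ 𝒰, x ∈ U)
    (hmult : MultLE 𝒰 (K + 1))
    (n₀ : N)
    (hsub : ∀ ε : ℝ, 0 < ε → ∃ M : ℝ, ∀ m : ℝ, M ≤ m →
      ∀ U ∈ 𝒰, (∃ u ∈ U, dist n₀ u ≤ m) → ∀ x ∈ U, ∀ y ∈ U, dist x y ≤ ε * m) :
    ∀ B : Set N, IsCompact B → ∀ ℬ : Set (Set N), (∀ b ∈ ℬ, IsOpen b) → B ⊆ ⋃₀ ℬ →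
      ∃ 𝒱 : Set (Set N), (∀ V ∈ 𝒱, IsOpen V ∧ ∃ b ∈ ℬ, V ⊆ b) ∧
        B ⊆ ⋃₀ 𝒱 ∧ MultLE 𝒱 (K + 1) := by
  intro B hB ℬ hℬo hℬc
  obtain ⟨hlam0, hlam1⟩ := hlam
  -- inverse dilation scaling
  have hψs : ∀ x y : N, dist (ψ.symm x) (ψ.symm y) = lam⁻¹ * dist x y := by
    intro x y
    have h := hψ (ψ.symm x) (ψ.symm y)
    simp only [Equiv.apply_symm_apply] at h
    field_simp [h]
    rw [h]; ring
  set F := iterSymmEquiv ψ with hFdef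
  have hF : ∀ k (x y : N), lam ^ k * dist (F k x) (F k y) = dist x y := by
    intro k
    induction k with
    | zero => intro x y; simp [hFdef, iterSymmEquiv]
    | succ k ih =>
      intro x y
      show lam ^ (k + 1) * dist (ψ.symm (F k x)) (ψ.symm (F k y)) = dist x y
      rw [hψs, pow_succ]
      have h1 : lam * lam⁻¹ = 1 := by field_simp
      calc lam ^ k * lam * (lam⁻¹ * dist (F k x) (F k y))
          = (lam * lam⁻¹) * (lam ^ k * dist (F k x) (F k y)) := by ring
        _ = dist x y := by rw [h1, ih x y]; ring
  have hψsc : Continuous (ψ.symm : N → N) := by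
    refine LipschitzWith.continuous (K := ⟨lam⁻¹, by positivity⟩) ?_
    refine LipschitzWith.of_dist_le_mul fun x y => ?_
    rw [hψs]
    norm_num
    exact le_rfl
  have hFc : ∀ k, Continuous (F k) := by
    intro k
    induction k with
    | zero => exact continuous_id
    | succ k ih =>
      show Continuous fun x => ψ.symm (F k x)
      exact hψsc.comp ih
  set a := dist n₀ (ψ.symm n₀) with ha
  set μ := a * lam / (1 - lam) with hμ
  have hμ0 : 0 ≤ μ := by
    apply div_nonneg (mul_nonneg dist_nonneg hlam0.le); linarith
  have hdn : ∀ k, dist n₀ (F k n₀) ≤ μ * ((lam ^ k)⁻¹ - 1) := by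
    intro k
    induction k with
    | zero => simp [hFdef, iterSymmEquiv]
    | succ k ih =>
      have hstep : dist n₀ (F (k + 1) n₀) ≤ a + lam⁻¹ * dist n₀ (F k n₀) := by
        calc dist n₀ (F (k + 1) n₀) ≤ dist n₀ (ψ.symm n₀) + dist (ψ.symm n₀) (ψ.symm (F k n₀)) :=
              dist_triangle _ _ _
          _ = a + lam⁻¹ * dist n₀ (F k n₀) := by rw [hψs]
      have hlk : (0:ℝ) < lam ^ k := by positivity
      have key : a + lam⁻¹ * (μ * ((lam ^ k)⁻¹ - 1)) = μ * ((lam ^ (k + 1))⁻¹ - 1) := by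
        have hne : lam ≠ 0 := ne_of_gt hlam0
        have hne2 : lam ^ k ≠ 0 := ne_of_gt hlk
        have hne3 : (1 : ℝ) - lam ≠ 0 := by linarith
        rw [hμ, pow_succ]
        field_simp
        ring
      have h2 : lam⁻¹ * dist n₀ (F k n₀) ≤ lam⁻¹ * (μ * ((lam ^ k)⁻¹ - 1)) := by
        apply mul_le_mul_of_nonneg_left ih (by positivity)
      linarith
  -- bound B
  obtain ⟨r, hr⟩ := hB.isBounded.subset_closedBall n₀
  set R := max r 0 with hR
  have hR0 : (0:ℝ) ≤ R := le_max_right r 0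
  have hBR : B ⊆ closedBall n₀ R := hr.trans (closedBall_subset_closedBall (le_max_left r 0))
  -- Lebesgue number
  obtain ⟨δ, hδ0, hδ⟩ := lebesgue_number_lemma_of_metric_sUnion hB hℬo hℬc
  set C := μ + R + 1 with hC
  have hC0 : (0:ℝ) < C := by linarith
  set ε := δ / (2 * C) with hε
  have hε0 : 0 < ε := by positivity
  obtain ⟨M, hM⟩ := hsub ε hε0
  obtain ⟨k, hk⟩ := exists_pow_lt_of_lt_one (show (0:ℝ) < C / max M 1 by positivity) hlam1
  have hlk : (0:ℝ) < lam ^ k := by positivity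
  set m := C * (lam ^ k)⁻¹ with hm
  have hMm : M ≤ m := by
    have hmax : (0:ℝ) < max M 1 := lt_of_lt_of_le one_pos (le_max_right M 1)
    have h1 : lam ^ k * max M 1 < C := by
      have h := mul_lt_mul_of_pos_right hk hmax
      rwa [div_mul_cancel₀ _ (ne_of_gt hmax)] at h
    have h2 : max M 1 ≤ m := by
      rw [hm, ← div_eq_mul_inv, le_div_iff₀ hlk]
      nlinarith
    exact (le_max_left M 1).trans h2
  -- the candidate cover
  set 𝒱 : Set (Set N) := {V | ∃ U ∈ 𝒰, V = F k ⁻¹' U ∧ (V ∩ B).Nonempty} with h𝒱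
  refine ⟨𝒱, ?_, ?_, ?_⟩
  · rintro V ⟨U, hU, rfl, ⟨x₀, hx₀V, hx₀B⟩⟩
    refine ⟨(hopen U hU).preimage (hFc k), ?_⟩
    obtain ⟨b, hb, hball⟩ := hδ x₀ hx₀B
    refine ⟨b, hb, fun y hy => hball ?_⟩
    -- show dist x₀ y < δ
    have hx₀U : F k x₀ ∈ U := hx₀V
    have hyU : F k y ∈ U := hy
    have hdnx : dist n₀ (F k x₀) ≤ m := by
      have h1 : dist (F k n₀) (F k x₀) = dist n₀ x₀ * (lam ^ k)⁻¹ := by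
        have := hF k n₀ x₀
        field_simp
        linarith [this]
      have h2 : dist n₀ x₀ ≤ R := by
        have := hBR hx₀B; rwa [mem_closedBall, dist_comm] at this
      have h3 : dist n₀ (F k x₀) ≤ dist n₀ (F k n₀) + dist (F k n₀) (F k x₀) :=
        dist_triangle _ _ _
      have h4 : (0:ℝ) < (lam ^ k)⁻¹ := by positivity
      have h5 : dist (F k n₀) (F k x₀) ≤ R * (lam ^ k)⁻¹ := by
        rw [h1]; exact mul_le_mul_of_nonneg_right h2 h4.le
      have h6 := hdn k
      rw [hm, hC]
      nlinarith
    have hd := hM m hMm U hU ⟨F k x₀, hx₀U, hdnx⟩ (F k x₀) hx₀U (F k y) hyU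
    have hdxy : dist x₀ y ≤ lam ^ k * (ε * m) := by
      rw [← hF k x₀ y]
      exact mul_le_mul_of_nonneg_left hd hlk.le
    have hεm : ε * m = δ * (lam ^ k)⁻¹ / 2 := by
      rw [hε, hm]; field_simp
    have : dist x₀ y ≤ δ / 2 := by
      rw [hεm] at hdxy
      have : lam ^ k * (δ * (lam ^ k)⁻¹ / 2) = δ / 2 := by field_simp
      linarith [hdxy.trans_eq this]
    rw [mem_ball, dist_comm]
    linarith
  · intro x hx
    obtain ⟨U, hU, hmem⟩ := hcover (F k x)
    exact ⟨F k ⁻¹' U, ⟨U, hU, rfl, ⟨x, hmem, hx⟩⟩, hmem⟩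
  · intro x s hs hx
    classical
    have hinj : Function.Injective (fun V : Set N => F k '' V) :=
      Set.image_injective.mpr (F k).injective
    set t := s.image (fun V => F k '' V) with ht
    have hcard : t.card = s.card := Finset.card_image_of_injective s hinj
    have := hmult (F k x) t ?_ ?_
    · omega
    · intro W hW
      simp only [ht, Finset.coe_image, Set.mem_image, Finset.mem_coe] at hW
      obtain ⟨V, hVs, rfl⟩ := hW
      obtain ⟨U, hU, rfl, -⟩ := hs hVs
      rwa [Equiv.image_preimage]
    · intro W hW
      simp only [ht, Finset.mem_image] at hW
      obtain ⟨V, hVs, rfl⟩ := hW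
      exact ⟨x, hx V hVs, rfl⟩
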